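/- Let s be a finite set of cardinality N ≥ 2, let 1 ≤ P ≤ N, let x : ι → E take values in a real inner product space E, and set x̄ = (1/N)∑_{j ∈ s} x_j. If a subset C is drawn uniformly at random from the P-element subsets of s, then the expectation of ‖(N/P)∑_{j ∈ C} x_j − ∑_{j ∈ s} x_j‖² equals (N(N−P)/(P(N−1))) · ∑_{j ∈ s} ‖x_j − x̄‖². -/

import Mathlib

open Finset in
/-- The number of `P`-element subsets of `s` containing a fixed subset `t`. -/
lemma count_subsets_aux {α : Type*} [DecidableEq α] (s t : Finset α) (P : ℕ)
    (ht : t ⊆ s) (htP : t.card ≤ P) :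
    ((s.powersetCard P).filter (fun C => t ⊆ C)).card
      = (s.card - t.card).choose (P - t.card) := by
  rw [← Finset.card_sdiff_of_subset ht, ← Finset.card_powersetCard]
  refine Finset.card_bij' (fun C _ => C \ t) (fun D _ => D ∪ t) ?_ ?_ ?_ ?_
  · intro C hC
    simp only [Finset.mem_filter, Finset.mem_powersetCard] at hC
    obtain ⟨⟨hCs, hCP⟩, htC⟩ := hC
    simp only [Finset.mem_powersetCard]
    exact ⟨Finset.sdiff_subset_sdiff hCs le_rfl,
      by rw [Finset.card_sdiff_of_subset htC, hCP]⟩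
  · intro D hD
    simp only [Finset.mem_powersetCard] at hD
    obtain ⟨hDs, hDc⟩ := hD
    have hdisj : Disjoint D t :=
      Finset.disjoint_of_subset_left hDs Finset.sdiff_disjoint
    simp only [Finset.mem_filter, Finset.mem_powersetCard]
    refine ⟨⟨Finset.union_subset (hDs.trans Finset.sdiff_subset) ht, ?_⟩,
      Finset.subset_union_right⟩
    rw [Finset.card_union_of_disjoint hdisj, hDc]
    omega
  · intro C hC
    simp only [Finset.mem_filter] at hC
    exact Finset.sdiff_union_of_subset hC.2
  · intro D hD
    simp only [Finset.mem_powersetCard] at hD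
    exact Finset.union_sdiff_cancel_right
      (Finset.disjoint_of_subset_left hD.1 Finset.sdiff_disjoint)

/-- Vector-valued mean squared error of the random batch estimator: for `x` valued in a
real inner product space `E`, with `C` drawn uniformly at random from the `P`-element
subsets of `s`, the expectation of `‖(N/P) • ∑ j ∈ C, x j - ∑ j ∈ s, x j‖²` equals
`(N(N-P)/(P(N-1))) ∑ j ∈ s, ‖x j - x̄‖²` where `x̄ = (1/N) • ∑ j ∈ s, x j`. -/
theorem stmt_6 {ι : Type*} [DecidableEq ι] {E : Type*}
    [NormedAddCommGroup E] [InnerProductSpace ℝ E]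
    (s : Finset ι) (N P : ℕ)
    (hN : s.card = N) (hN2 : 2 ≤ N) (hP1 : 1 ≤ P) (hPN : P ≤ N) (x : ι → E) :
    ((s.powersetCard P).card : ℝ)⁻¹
        * ∑ C ∈ s.powersetCard P,
            ‖((N : ℝ) / (P : ℝ)) • (∑ j ∈ C, x j) - ∑ j ∈ s, x j‖ ^ 2
      = ((N : ℝ) * ((N : ℝ) - (P : ℝ)) / ((P : ℝ) * ((N : ℝ) - 1)))
          * ∑ j ∈ s, ‖x j - ((N : ℝ))⁻¹ • (∑ k ∈ s, x k)‖ ^ 2 := by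
  classical
  have hP0 : (P : ℝ) ≠ 0 := Nat.cast_ne_zero.mpr (by omega)
  have hN0 : (N : ℝ) ≠ 0 := Nat.cast_ne_zero.mpr (by omega)
  have hN1 : (N : ℝ) - 1 ≠ 0 := by
    have : (2 : ℝ) ≤ N := by exact_mod_cast hN2
    linarith
  set T : E := ∑ k ∈ s, x k with hT
  set xb : E := (N : ℝ)⁻¹ • T with hxb
  set y : ι → E := fun i => x i - xb with hy
  -- the recentered values sum to zero
  have hsumy : ∑ j ∈ s, y j = 0 := by
    simp only [hy, Finset.sum_sub_distrib, Finset.sum_const, hN,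
      ← Nat.cast_smul_eq_nsmul ℝ, hxb, smul_smul, mul_inv_cancel₀ hN0, one_smul,
      sub_self, ← hT]
  -- each summand in terms of y
  have hstep : ∀ C ∈ s.powersetCard P,
      ‖((N : ℝ) / (P : ℝ)) • (∑ j ∈ C, x j) - T‖ ^ 2
        = ((N : ℝ) / P) ^ 2 * ‖∑ j ∈ C, y j‖ ^ 2 := by
    intro C hC
    obtain ⟨hCs, hCP⟩ := Finset.mem_powersetCard.mp hC
    have h1 : ∑ j ∈ C, y j = (∑ j ∈ C, x j) - (P : ℝ) • xb := by
      simp only [hy, Finset.sum_sub_distrib, Finset.sum_const, hCP,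
        ← Nat.cast_smul_eq_nsmul ℝ]
    have h2 : ((N : ℝ) / P) • (∑ j ∈ C, y j)
        = ((N : ℝ) / P) • (∑ j ∈ C, x j) - T := by
      rw [h1, smul_sub, smul_smul, div_mul_cancel₀ _ hP0, hxb, smul_smul,
        mul_inv_cancel₀ hN0, one_smul]
    rw [← h2, norm_smul, mul_pow, Real.norm_eq_abs, sq_abs]
  -- expand the norm of the inner sum via inner products
  have hexp : ∀ C : Finset ι, ‖∑ j ∈ C, y j‖ ^ 2
      = ∑ i ∈ C, ∑ j ∈ C, (inner ℝ (y i) (y j) : ℝ) := by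
    intro C
    rw [← real_inner_self_eq_norm_sq, sum_inner]
    exact Finset.sum_congr rfl fun i _ => inner_sum _ _ _
  -- rewrite inner double sums over C as sums over s with indicators
  have hsplit : ∀ C ∈ s.powersetCard P,
      (∑ i ∈ C, ∑ j ∈ C, (inner ℝ (y i) (y j) : ℝ))
        = ∑ i ∈ s, ∑ j ∈ s,
            (if i ∈ C ∧ j ∈ C then (inner ℝ (y i) (y j) : ℝ) else 0) := by
    intro C hC
    obtain ⟨hCs, -⟩ := Finset.mem_powersetCard.mp hC
    have hsub : ∀ h : ι → ℝ, ∑ i ∈ C, h i = ∑ i ∈ s, if i ∈ C then h i else 0 := by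
      intro h
      rw [Finset.sum_ite_mem, Finset.inter_eq_right.mpr hCs]
    rw [hsub]
    refine Finset.sum_congr rfl fun i _ => ?_
    by_cases hi : i ∈ C
    · simp only [hi, if_true, true_and]
      exact hsub _
    · simp [hi]
  -- exchange the order of summation and count
  have hcount : ∑ C ∈ s.powersetCard P, ∑ i ∈ s, ∑ j ∈ s,
        (if i ∈ C ∧ j ∈ C then (inner ℝ (y i) (y j) : ℝ) else 0)
      = ∑ i ∈ s, ∑ j ∈ s,
          (((s.powersetCard P).filter (fun C => i ∈ C ∧ j ∈ C)).card : ℝ)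
            * (inner ℝ (y i) (y j) : ℝ) := by
    rw [Finset.sum_comm]
    refine Finset.sum_congr rfl fun i _ => ?_
    rw [Finset.sum_comm]
    refine Finset.sum_congr rfl fun j _ => ?_
    rw [Finset.sum_ite, Finset.sum_const_zero, add_zero, Finset.sum_const,
      nsmul_eq_mul]
  -- diagonal count
  have hA : ∀ i ∈ s,
      (((s.powersetCard P).filter (fun C => i ∈ C ∧ i ∈ C)).card : ℝ)
        = ((N - 1).choose (P - 1) : ℝ) := by
    intro i hi
    have h1 : ((s.powersetCard P).filter (fun C => i ∈ C ∧ i ∈ C))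
        = ((s.powersetCard P).filter (fun C => ({i} : Finset ι) ⊆ C)) := by
      apply Finset.filter_congr
      intro C _
      simp [Finset.singleton_subset_iff]
    rw [h1, count_subsets_aux _ _ _ (Finset.singleton_subset_iff.mpr hi)
      (by simpa using hP1), Finset.card_singleton, hN]
  -- off-diagonal count (as a natural number identity)
  have hBnat : ∀ i ∈ s, ∀ j ∈ s, i ≠ j →
      (N * (N - 1)) *
          ((s.powersetCard P).filter (fun C => i ∈ C ∧ j ∈ C)).card
        = N.choose P * (P * (P - 1)) := by
    intro i hi j hj hij
    rcases eq_or_lt_of_le hP1 with h1 | h2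
    · have hempty : ((s.powersetCard P).filter (fun C => i ∈ C ∧ j ∈ C)) = ∅ := by
        rw [Finset.filter_eq_empty_iff]
        intro C hC
        obtain ⟨-, hCP⟩ := Finset.mem_powersetCard.mp hC
        rintro ⟨hiC, hjC⟩
        have h2 : 1 < C.card := Finset.one_lt_card.mpr ⟨i, hiC, j, hjC, hij⟩
        omega
      rw [hempty]
      simp [← h1]
    · have hP2 : 2 ≤ P := h2
      have hcard2 : ({i, j} : Finset ι).card = 2 := by
        rw [Finset.card_insert_of_notMem (by simp [hij]), Finset.card_singleton]
      have h1 : ((s.powersetCard P).filter (fun C => i ∈ C ∧ j ∈ C))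
          = ((s.powersetCard P).filter (fun C => ({i, j} : Finset ι) ⊆ C)) := by
        apply Finset.filter_congr
        intro C _
        simp [Finset.insert_subset_iff]
      rw [h1, count_subsets_aux _ _ _ (by simp [Finset.insert_subset_iff, hi, hj])
        (by omega), hcard2, hN]
      have e1 : (N - 1) * (N - 2).choose (P - 2) = (N - 1).choose (P - 1) * (P - 1) := by
        have h := Nat.add_one_mul_choose_eq (N - 2) (P - 2)
        have hn : N - 2 + 1 = N - 1 := by omega
        have hp : P - 2 + 1 = P - 1 := by omega
        simpa [Nat.succ_eq_add_one, hn, hp] using h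
      have e2 : N * (N - 1).choose (P - 1) = N.choose P * P := by
        have h := Nat.add_one_mul_choose_eq (N - 1) (P - 1)
        have hn : N - 1 + 1 = N := by omega
        have hp : P - 1 + 1 = P := by omega
        simpa [Nat.succ_eq_add_one, hn, hp] using h
      calc N * (N - 1) * (N - 2).choose (P - 2)
          = N * ((N - 1) * (N - 2).choose (P - 2)) := by ring
        _ = N * ((N - 1).choose (P - 1) * (P - 1)) := by rw [e1]
        _ = (N * (N - 1).choose (P - 1)) * (P - 1) := by ring
        _ = (N.choose P * P) * (P - 1) := by rw [e2]
        _ = N.choose P * (P * (P - 1)) := by ring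
  -- abbreviations
  set Mc : ℝ := (N.choose P : ℝ) with hMc
  set a : ℝ := ((N - 1).choose (P - 1) : ℝ) with ha
  set b : ℝ := Mc * P * ((P : ℝ) - 1) / ((N : ℝ) * ((N : ℝ) - 1)) with hb
  have hMc0 : Mc ≠ 0 := Nat.cast_ne_zero.mpr (Nat.choose_pos hPN).ne'
  have hB : ∀ i ∈ s, ∀ j ∈ s, i ≠ j →
      (((s.powersetCard P).filter (fun C => i ∈ C ∧ j ∈ C)).card : ℝ) = b := by
    intro i hi j hj hij
    have h := hBnat i hi j hj hij
    have hcast : ((N : ℝ) * ((N : ℝ) - 1)) *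
        (((s.powersetCard P).filter (fun C => i ∈ C ∧ j ∈ C)).card : ℝ)
        = Mc * ((P : ℝ) * ((P : ℝ) - 1)) := by
      have := congrArg (fun n : ℕ => (n : ℝ)) h
      push_cast [Nat.cast_sub (by omega : 1 ≤ N), Nat.cast_sub hP1] at this
      convert this using 2
    have hNN1 : (N : ℝ) * ((N : ℝ) - 1) ≠ 0 := mul_ne_zero hN0 hN1
    rw [hb, eq_div_iff hNN1]
    linarith [hcast]
  -- the total double sum of inner products is zero
  have htot : ∑ i ∈ s, ∑ j ∈ s, (inner ℝ (y i) (y j) : ℝ) = 0 := by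
    have : ∀ i ∈ s, ∑ j ∈ s, (inner ℝ (y i) (y j) : ℝ) = inner ℝ (y i) (∑ j ∈ s, y j) :=
      fun i _ => (inner_sum _ _ _).symm
    rw [Finset.sum_congr rfl this, hsumy]
    simp
  -- evaluate the counted double sum
  set D : ℝ := ∑ i ∈ s, ‖y i‖ ^ 2 with hD
  have key : ∑ i ∈ s, ∑ j ∈ s,
        (((s.powersetCard P).filter (fun C => i ∈ C ∧ j ∈ C)).card : ℝ)
          * (inner ℝ (y i) (y j) : ℝ)
      = (a - b) * D := by
    have h1 : ∀ i ∈ s, ∑ j ∈ s,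
        (((s.powersetCard P).filter (fun C => i ∈ C ∧ j ∈ C)).card : ℝ)
          * (inner ℝ (y i) (y j) : ℝ)
        = (a - b) * ‖y i‖ ^ 2 + b * ∑ j ∈ s, (inner ℝ (y i) (y j) : ℝ) := by
      intro i hi
      rw [← Finset.add_sum_erase _ _ hi, ← Finset.add_sum_erase _
        (fun j => (inner ℝ (y i) (y j) : ℝ)) hi, hA i hi]
      have h2 : ∑ j ∈ s.erase i,
          (((s.powersetCard P).filter (fun C => i ∈ C ∧ j ∈ C)).card : ℝ)
            * (inner ℝ (y i) (y j) : ℝ)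
          = b * ∑ j ∈ s.erase i, (inner ℝ (y i) (y j) : ℝ) := by
        rw [Finset.mul_sum]
        refine Finset.sum_congr rfl fun j hj => ?_
        rw [hB i hi j (Finset.mem_of_mem_erase hj)
          (Finset.ne_of_mem_erase hj).symm]
      rw [h2, real_inner_self_eq_norm_sq]
      ring
    rw [Finset.sum_congr rfl h1, Finset.sum_add_distrib, ← Finset.mul_sum,
      ← Finset.mul_sum, htot, mul_zero, add_zero, ← hD]
  -- relation between a and Mc
  have haMc : (N : ℝ) * a = Mc * P := by
    have h := Nat.add_one_mul_choose_eq (N - 1) (P - 1)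
    have hn : N - 1 + 1 = N := by omega
    have hp : P - 1 + 1 = P := by omega
    have h' : N * (N - 1).choose (P - 1) = N.choose P * P := by
      simpa [Nat.succ_eq_add_one, hn, hp] using h
    rw [ha, hMc]
    exact_mod_cast congrArg (fun n : ℕ => (n : ℝ)) h'
  -- put it all together
  rw [Finset.sum_congr rfl hstep, ← Finset.mul_sum]
  have hrw : ∑ C ∈ s.powersetCard P, ‖∑ j ∈ C, y j‖ ^ 2 = (a - b) * D := by
    rw [← key, ← hcount]
    refine Finset.sum_congr rfl fun C hC => ?_
    rw [hexp C, hsplit C hC]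
  rw [hrw, Finset.card_powersetCard, hN, ← hMc]
  have hafin : a = Mc * P / N := by field_simp; linarith [haMc]
  rw [hafin, hb]
  field_simp
  ring
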